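/- Chern-Lu inequality with maximum principle: Let (X, ω) and (X, ω₀) be compact Kähler manifolds with Ric(ω) ≥ 0 and the holomorphic bisectional curvature of ω₀ bounded above by c₃. Let e = tr_ω ω₀ and suppose ω = ω₀ + √-1∂∂̄ψ with |ψ| ≤ c₂. If Δ_ω(log e - c₄ψ) ≥ c₅ e - c₆ with c₄, c₅ > 0, then e ≤ c₆' for a constant c₆' depending only on c₂, c₄, c₅, c₆; consequently ω ≥ (c₆')^{-1} ω₀. -/
import Mathlib


open Set

/-- Chern–Lu inequality, maximum principle step: X compact,
e = tr_ω ω₀ > 0, |ψ| ≤ c₂, and L = Δ_ω(log e - c₄ψ) satisfies the Chern–Lu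
differential inequality L ≥ c₅ e - c₆ (which holds when Ric(ω) ≥ 0 and the
bisectional curvature of ω₀ is bounded above); at an interior maximum of
log e - c₄ψ one has L ≤ 0.  Conclusion: e ≤ (c₆/c₅)·exp(2c₄c₂) everywhere,
i.e. ω ≥ (c₆')⁻¹ ω₀ with c₆' depending only on c₂, c₄, c₅, c₆. -/
theorem stmt12 {X : Type*} [TopologicalSpace X] [CompactSpace X] [Nonempty X]
    (e ψ L : X → ℝ) (c₂ c₄ c₅ c₆ : ℝ)
    (hc₂ : 0 ≤ c₂) (hc₄ : 0 < c₄) (hc₅ : 0 < c₅)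
    (he : Continuous e) (hψ : Continuous ψ)
    (hepos : ∀ x, 0 < e x) (hψb : ∀ x, |ψ x| ≤ c₂)
    (hCL : ∀ x, c₅ * e x - c₆ ≤ L x)
    (hmax : ∀ p : X, IsMaxOn (fun x => Real.log (e x) - c₄ * ψ x) univ p → L p ≤ 0) :
    ∀ x, e x ≤ (c₆ / c₅) * Real.exp (2 * c₄ * c₂) := by
  obtain ⟨p, -, hp⟩ := IsCompact.exists_isMaxOn (isCompact_univ)
    univ_nonempty (((he.log fun x => (hepos x).ne').sub (continuous_const.mul hψ)).continuousOn)
  have hLp : L p ≤ 0 := hmax p hp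
  have hep : e p ≤ c₆ / c₅ := by
    have := hCL p
    rw [le_div_iff₀ hc₅]
    nlinarith
  intro x
  have hx : Real.log (e x) - c₄ * ψ x ≤ Real.log (e p) - c₄ * ψ p :=
    hp (mem_univ x)
  have hψx := abs_le.1 (hψb x)
  have hψp := abs_le.1 (hψb p)
  have hlog : Real.log (e x) ≤ Real.log (e p) + 2 * c₄ * c₂ := by nlinarith
  have h1 : e x = Real.exp (Real.log (e x)) := (Real.exp_log (hepos x)).symm
  calc e x = Real.exp (Real.log (e x)) := h1
    _ ≤ Real.exp (Real.log (e p) + 2 * c₄ * c₂) := Real.exp_le_exp.2 hlog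
    _ = e p * Real.exp (2 * c₄ * c₂) := by
        rw [Real.exp_add, Real.exp_log (hepos p)]
    _ ≤ (c₆ / c₅) * Real.exp (2 * c₄ * c₂) := by
        exact mul_le_mul_of_nonneg_right hep (Real.exp_nonneg _)
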